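/- (The set Y is Diophantine in Sp₄; instance of the paper's Proposition on G_{sc}(C₂,R).) Let R be a commutative ring. Then {⁅g, 1 + (E₂₁ − E₃₄)⁆ : g ∈ Sp₄(R) and g commutes with each of 1 + E₁₃, 1 + E₂₄, 1 + E₄₂, 1 + (E₁₂ − E₄₃), 1 + (E₁₄ + E₂₃)} = {1 + t·(E₁₄ + E₂₃) + t·E₂₄ : t ∈ R}, where ⁅x, y⁆ = x·y·x⁻¹·y⁻¹. In other words, the set Y = {x_{e₁+e₂}(t)·x_{2e₂}(t) : t ∈ R} equals the set of commutators of elements of the centralizer of Γ_{2e₁} with the fixed element x_{e₂−e₁}(1) = 1 + (E₂₁ − E₃₄). -/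

import Mathlib

open Matrix

/-- The 4×4 matrix unit over `R`, with rows and columns indexed by `Fin 2 ⊕ Fin 2`
(so that `1,2,3,4` correspond to `inl 0, inl 1, inr 0, inr 1`). -/
def Esp (R : Type*) [CommRing R] (i j : Fin 2 ⊕ Fin 2) :
    Matrix (Fin 2 ⊕ Fin 2) (Fin 2 ⊕ Fin 2) R :=
  Matrix.single i j 1

/-- Any matrix commuting with the four root elements `1 + E₁₃`, `1 + E₂₄`, `1 + E₄₂`,
`1 + (E₁₂ − E₄₃)` has the form `a • 1 + b • E₁₃`. -/
theorem Esp_struct {R : Type*} [CommRing R] (g : Matrix (Fin 2 ⊕ Fin 2) (Fin 2 ⊕ Fin 2) R)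
    (h1 : g * (1 + Esp R (.inl 0) (.inr 0)) = (1 + Esp R (.inl 0) (.inr 0)) * g)
    (h2 : g * (1 + Esp R (.inl 1) (.inr 1)) = (1 + Esp R (.inl 1) (.inr 1)) * g)
    (h3 : g * (1 + Esp R (.inr 1) (.inl 1)) = (1 + Esp R (.inr 1) (.inl 1)) * g)
    (h4 : g * (1 + (Esp R (.inl 0) (.inl 1) - Esp R (.inr 1) (.inr 0))) =
          (1 + (Esp R (.inl 0) (.inl 1) - Esp R (.inr 1) (.inr 0))) * g) :
    g = g (.inl 0) (.inl 0) • 1 + g (.inl 0) (.inr 0) • Esp R (.inl 0) (.inr 0) := by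
  have ex : ∀ {A : Matrix (Fin 2 ⊕ Fin 2) (Fin 2 ⊕ Fin 2) R}
      (h : g * A = A * g) (i j : Fin 2 ⊕ Fin 2), (g * A) i j = (A * g) i j :=
    fun h i j => congrFun (congrFun h i) j
  have e21 := ex h1 (Sum.inl 1) (Sum.inr 0)
  have e31 := ex h1 (Sum.inr 0) (Sum.inr 0)
  have e41 := ex h1 (Sum.inr 1) (Sum.inr 0)
  have e32 := ex h1 (Sum.inl 0) (Sum.inl 1)
  have e34 := ex h1 (Sum.inl 0) (Sum.inr 1)
  have e33 := ex h1 (Sum.inl 0) (Sum.inr 0)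
  have e12 := ex h2 (Sum.inl 0) (Sum.inr 1)
  have e42 := ex h2 (Sum.inr 1) (Sum.inr 1)
  have e43 := ex h2 (Sum.inl 1) (Sum.inr 0)
  have e44 := ex h2 (Sum.inl 1) (Sum.inr 1)
  have e14 := ex h3 (Sum.inl 0) (Sum.inl 1)
  have e24 := ex h3 (Sum.inl 1) (Sum.inl 1)
  have e23 := ex h3 (Sum.inr 1) (Sum.inr 0)
  have e22 := ex h4 (Sum.inl 0) (Sum.inl 1)
  simp only [Matrix.mul_apply, Matrix.add_apply, Matrix.sub_apply, Matrix.one_apply, Esp,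
    Matrix.single, Matrix.of_apply, Fintype.sum_sum_type, Fin.sum_univ_two] at e21 e31 e41 e32 e34 e33 e12 e42 e43 e44 e14 e24 e23 e22
  simp at e21 e31 e41 e32 e34 e33 e12 e42 e43 e44 e14 e24 e23 e22
  have f33 : g (Sum.inr 0) (Sum.inr 0) = g (Sum.inl 0) (Sum.inl 0) := by linear_combination -e33
  have f22 : g (Sum.inl 1) (Sum.inl 1) = g (Sum.inl 0) (Sum.inl 0) := by linear_combination -e22
  have f44 : g (Sum.inr 1) (Sum.inr 1) = g (Sum.inl 0) (Sum.inl 0) := by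
    linear_combination -e44 - e22
  ext i j
  fin_cases i <;> fin_cases j <;>
    simp [Esp, Matrix.single, Matrix.one_apply, e21, e31, e41, e32, e34, e12, e42,
      e43, e14, e24, e23, f33, f22, f44]

/-- Forward computation: if `g` and its inverse both have the form `a • 1 + b • E₁₃`,
then the commutator `⁅g, x_{e₂−e₁}(1)⁆` lies in `Y`. -/
theorem Y_fwd_aux {R : Type*} [CommRing R]
    (g gi : Matrix (Fin 2 ⊕ Fin 2) (Fin 2 ⊕ Fin 2) R)
    (hggi : g * gi = 1)
    (hg : g = g (.inl 0) (.inl 0) • 1 + g (.inl 0) (.inr 0) • Esp R (.inl 0) (.inr 0))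
    (hgi : gi = gi (.inl 0) (.inl 0) • 1 + gi (.inl 0) (.inr 0) • Esp R (.inl 0) (.inr 0)) :
    ∃ t : R,
      g * (1 + (Esp R (.inl 1) (.inl 0) - Esp R (.inr 0) (.inr 1))) * gi *
          (1 - (Esp R (.inl 1) (.inl 0) - Esp R (.inr 0) (.inr 1))) =
      1 + t • (Esp R (.inl 0) (.inr 1) + Esp R (.inl 1) (.inr 0)) +
        t • Esp R (.inl 1) (.inr 1) := by
  set a := g (Sum.inl 0) (Sum.inl 0) with ha
  set b := g (Sum.inl 0) (Sum.inr 0) with hb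
  set a' := gi (Sum.inl 0) (Sum.inl 0) with ha'
  set b' := gi (Sum.inl 0) (Sum.inr 0) with hb'
  have r1 : a * a' = 1 := by
    have := congrFun (congrFun hggi (Sum.inl 0)) (Sum.inl 0)
    rw [hg, hgi] at this
    simpa [Matrix.mul_apply, Matrix.add_apply, Matrix.smul_apply, Matrix.one_apply, Esp,
      Matrix.single, Fintype.sum_sum_type, Fin.sum_univ_two] using this
  have r2 : a * b' + b * a' = 0 := by
    have := congrFun (congrFun hggi (Sum.inl 0)) (Sum.inr 0)
    rw [hg, hgi] at this
    simpa [Matrix.mul_apply, Matrix.add_apply, Matrix.smul_apply, Matrix.one_apply, Esp,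
      Matrix.single, Fintype.sum_sum_type, Fin.sum_univ_two] using this
  refine ⟨a * b', ?_⟩
  rw [hg, hgi]
  ext i j
  fin_cases i <;> fin_cases j <;>
    simp [Matrix.mul_apply, Matrix.add_apply, Matrix.sub_apply, Matrix.smul_apply,
      Matrix.one_apply, Esp, Matrix.single, Fintype.sum_sum_type,
      Fin.sum_univ_two] <;>
    first
      | ring1
      | linear_combination r1
      | linear_combination r2

set_option maxHeartbeats 1000000 in
/-- The set `Y = {x_{e₁+e₂}(t)·x_{2e₂}(t) : t ∈ R}` is Diophantine in `Sp₄(R)`: the set of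
commutators `⁅g, x_{e₂−e₁}(1)⁆ = g · x_{e₂−e₁}(1) · g⁻¹ · x_{e₂−e₁}(1)⁻¹`, where `g`
ranges over the elements of `Sp₄(R)` commuting with each of `1 + E₁₃`, `1 + E₂₄`,
`1 + E₄₂`, `1 + (E₁₂ − E₄₃)` and `1 + (E₁₄ + E₂₃)` (the type `C₂` root elements at
parameter 1 commuting with `x_{2e₁}(1) = 1 + E₁₃`), is exactly
`{1 + t·(E₁₄ + E₂₃) + t·E₂₄ : t ∈ R}`. Here `x_{e₂−e₁}(1) = 1 + (E₂₁ − E₃₄)` and its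
inverse is `1 − (E₂₁ − E₃₄)`. -/
theorem Y_diophantine_C2 {R : Type*} [CommRing R] :
    {m : Matrix (Fin 2 ⊕ Fin 2) (Fin 2 ⊕ Fin 2) R |
      ∃ g gi : Matrix (Fin 2 ⊕ Fin 2) (Fin 2 ⊕ Fin 2) R,
        g ∈ Matrix.symplecticGroup (Fin 2) R ∧ g * gi = 1 ∧ gi * g = 1 ∧
        g * (1 + Esp R (.inl 0) (.inr 0)) = (1 + Esp R (.inl 0) (.inr 0)) * g ∧
        g * (1 + Esp R (.inl 1) (.inr 1)) = (1 + Esp R (.inl 1) (.inr 1)) * g ∧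
        g * (1 + Esp R (.inr 1) (.inl 1)) = (1 + Esp R (.inr 1) (.inl 1)) * g ∧
        g * (1 + (Esp R (.inl 0) (.inl 1) - Esp R (.inr 1) (.inr 0))) =
          (1 + (Esp R (.inl 0) (.inl 1) - Esp R (.inr 1) (.inr 0))) * g ∧
        g * (1 + (Esp R (.inl 0) (.inr 1) + Esp R (.inl 1) (.inr 0))) =
          (1 + (Esp R (.inl 0) (.inr 1) + Esp R (.inl 1) (.inr 0))) * g ∧
        m = g * (1 + (Esp R (.inl 1) (.inl 0) - Esp R (.inr 0) (.inr 1))) * gi *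
          (1 - (Esp R (.inl 1) (.inl 0) - Esp R (.inr 0) (.inr 1)))} =
    {m : Matrix (Fin 2 ⊕ Fin 2) (Fin 2 ⊕ Fin 2) R | ∃ t : R,
      m = 1 + t • (Esp R (.inl 0) (.inr 1) + Esp R (.inl 1) (.inr 0)) +
        t • Esp R (.inl 1) (.inr 1)} := by
  ext m
  simp only [Set.mem_setOf_eq]
  constructor
  · rintro ⟨g, gi, -, hggi, hgig, h1, h2, h3, h4, -, hm⟩
    have comm : ∀ A : Matrix (Fin 2 ⊕ Fin 2) (Fin 2 ⊕ Fin 2) R,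
        g * A = A * g → gi * A = A * gi := by
      intro A h
      calc gi * A = gi * A * (g * gi) := by rw [hggi, mul_one]
        _ = gi * (A * g) * gi := by simp only [mul_assoc]
        _ = gi * (g * A) * gi := by rw [h]
        _ = gi * g * A * gi := by simp only [mul_assoc]
        _ = A * gi := by rw [hgig, one_mul]
    have hg := Esp_struct g h1 h2 h3 h4
    have hgi := Esp_struct gi (comm _ h1) (comm _ h2) (comm _ h3) (comm _ h4)
    obtain ⟨t, ht⟩ := Y_fwd_aux g gi hggi hg hgi
    exact ⟨t, hm.trans ht⟩
  · rintro ⟨t, hm⟩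
    refine ⟨1 - t • Esp R (.inl 0) (.inr 0), 1 + t • Esp R (.inl 0) (.inr 0), ?_, ?_, ?_,
      ?_, ?_, ?_, ?_, ?_, ?_⟩
    · rw [SymplecticGroup.mem_iff]
      ext i j
      fin_cases i <;> fin_cases j <;>
        simp [Matrix.mul_apply, Matrix.J, Matrix.fromBlocks, Matrix.transpose_apply,
          Matrix.add_apply, Matrix.sub_apply, Matrix.smul_apply, Matrix.one_apply, Esp,
          Matrix.single, Fintype.sum_sum_type, Fin.sum_univ_two]
    all_goals
      try rw [hm]
      ext i j
      fin_cases i <;> fin_cases j <;>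
        simp [Matrix.mul_apply, Matrix.add_apply, Matrix.sub_apply, Matrix.smul_apply,
          Matrix.one_apply, Esp, Matrix.single, Fintype.sum_sum_type,
          Fin.sum_univ_two] <;> ring1
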